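/- For every n ≥ 1, p_2[h_n] = Σ_{a=0}^{n} (-1)^a s_{(2n-a, a)}, where (2n-a, a) denotes the partition of 2n with parts 2n-a ≥ a. -/

import Mathlib

open MvPolynomial

/-- The ring of symmetric functions, modeled as the polynomial ring
`ℚ[h₁, h₂, …]` in the complete homogeneous symmetric functions (variable `i`
corresponds to `h_{i+1}`). -/
abbrev SymF : Type := MvPolynomial ℕ ℚ

/-- The complete homogeneous symmetric function `h_n` as an element of `SymF`. -/
noncomputable def hh : ℕ → SymF
  | 0 => 1
  | n + 1 => X n

/-- The expression of `h_n` in terms of the power sums (in the polynomial ring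
`ℚ[p₁, p₂, …]`, variable `i` corresponding to `p_{i+1}`), via Newton's identity
`n·h_n = ∑_{i=1}^n p_i h_{n-i}`. -/
noncomputable def hInP : ℕ → MvPolynomial ℕ ℚ
  | 0 => 1
  | n + 1 =>
      ((n + 1 : ℚ))⁻¹ • ∑ i ∈ Finset.range (n + 1), X i * hInP (n - i)
  termination_by n => n
  decreasing_by omega

/-- The power sum symmetric function `p_n` as an element of `SymF`, via Newton's
identity `p_n = n·h_n - ∑_{i=1}^{n-1} p_i h_{n-i}`. -/
noncomputable def pSym : ℕ → SymF
  | 0 => 1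
  | n + 1 =>
      ((n : ℚ) + 1) • hh (n + 1) -
        ∑ i ∈ (Finset.range n).attach, pSym (i.1 + 1) * hh (n - i.1)
  termination_by n => n
  decreasing_by
    have h := Finset.mem_range.mp i.2
    omega

/-- The isomorphism expressing a symmetric function in the power sum basis. -/
noncomputable def toP : SymF →ₐ[ℚ] MvPolynomial ℕ ℚ :=
  aeval (fun i => hInP (i + 1))

/-- `psub k g = p_k[g]`, plethysm of a power sum with `g`: substitute `p_i ↦ p_{ik}`
in the power-sum expression of `g`. -/
noncomputable def psub (k : ℕ) (g : SymF) : SymF :=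
  aeval (fun i => pSym ((i + 1) * k)) (toP g)

/-- Plethysm `f[g]` of symmetric functions: substitute `p_k ↦ p_k[g]` in the
power-sum expression of `f`. -/
noncomputable def pleth (f g : SymF) : SymF :=
  aeval (fun i => psub (i + 1) g) (toP f)

/-- `h_z` for integer index: zero for negative `z`. -/
noncomputable def hZ (z : ℤ) : SymF := if 0 ≤ z then hh z.toNat else 0

/-- The Schur function of a partition given as a weakly decreasing list of parts,
defined by the Jacobi–Trudi determinant `s_λ = det(h_{λ_i - i + j})`. -/
noncomputable def schur (l : List ℕ) : SymF :=
  (Matrix.of fun i j : Fin l.length =>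
    hZ ((l.get i : ℤ) + (j : ℤ) - (i : ℤ))).det

/-- `z_λ` for the monomial `d` in the power sums: `∏_i i^{m_i} m_i!`. -/
def zQ (d : ℕ →₀ ℕ) : ℚ :=
  d.prod fun i m => ((i : ℚ) + 1) ^ m * (Nat.factorial m : ℚ)

/-- The Hall inner product, characterized by `⟨p_λ, p_μ⟩ = δ_{λμ} z_λ`, computed in
the power sum basis. -/
noncomputable def hall (f g : SymF) : ℚ :=
  ∑ d ∈ (toP f).support, zQ d * (toP f).coeff d * (toP g).coeff d

/-- The decreasingly sorted list of parts of a partition. -/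
def sortedParts {N : ℕ} (π : Nat.Partition N) : List ℕ :=
  (π.parts.sort (· ≤ ·)).reverse

open Finset

/-! ### auxiliary development -/

lemma newton (n : ℕ) : ((n : ℚ) + 1) • hh (n + 1) =
    ∑ i ∈ Finset.range (n + 1), pSym (i + 1) * hh (n - i) := by
  rw [Finset.sum_range_succ]
  have h0 : hh (n - n) = 1 := by simp [hh]
  rw [Nat.sub_self] at h0 ⊢
  rw [h0, mul_one, pSym,
    ← Finset.sum_attach (Finset.range n) (fun i => pSym (i + 1) * hh (n - i))]
  ring

noncomputable def qq : ℕ → SymF := fun k => if k = 0 then 0 else pSym k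

lemma qnewton (a : ℕ) : (a : ℚ) • hh a =
    ∑ x ∈ Finset.HasAntidiagonal.antidiagonal a, qq x.1 * hh x.2 := by
  cases a with
  | zero => simp [qq]
  | succ n =>
    rw [Finset.Nat.sum_antidiagonal_eq_sum_range_succ_mk, Finset.sum_range_succ',
      show ((n+1:ℕ):ℚ) = (n:ℚ)+1 by push_cast; ring, newton]
    have h0 : qq 0 = 0 := by simp [qq]
    rw [h0, zero_mul, add_zero]
    apply Finset.sum_congr rfl
    intro i hi
    have : qq (i+1) = pSym (i+1) := by simp [qq]
    rw [this]
    congr 2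
    omega

lemma triple {M : Type} [AddCommMonoid M] (r : ℕ) (F : ℕ → ℕ → ℕ → M) :
    ∑ x ∈ Finset.HasAntidiagonal.antidiagonal r, ∑ y ∈ Finset.HasAntidiagonal.antidiagonal x.1, F y.1 y.2 x.2
    = ∑ x ∈ Finset.HasAntidiagonal.antidiagonal r, ∑ y ∈ Finset.HasAntidiagonal.antidiagonal x.2, F x.1 y.1 y.2 := by
  rw [Finset.sum_sigma', Finset.sum_sigma']
  apply Finset.sum_nbij' (i := fun s => (⟨(s.2.1, s.2.2 + s.1.2), (s.2.2, s.1.2)⟩ :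
      (_ : ℕ × ℕ) × (ℕ × ℕ)))
    (j := fun s => (⟨(s.1.1 + s.2.1, s.2.2), (s.1.1, s.2.1)⟩ : (_ : ℕ × ℕ) × (ℕ × ℕ)))
  case hi =>
    rintro ⟨⟨a,b⟩,⟨k,j⟩⟩ hs
    simp only [mem_sigma, HasAntidiagonal.mem_antidiagonal] at hs ⊢
    exact ⟨by omega, trivial⟩
  case hj =>
    rintro ⟨⟨k,m⟩,⟨j,b⟩⟩ hs
    simp only [mem_sigma, HasAntidiagonal.mem_antidiagonal] at hs ⊢
    exact ⟨by omega, trivial⟩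
  case left_neg =>
    rintro ⟨⟨a,b⟩,⟨k,j⟩⟩ hs
    simp only [mem_sigma, HasAntidiagonal.mem_antidiagonal] at hs
    obtain ⟨h1, h2⟩ := hs
    subst h2
    rfl
  case right_neg =>
    rintro ⟨⟨k,m⟩,⟨j,b⟩⟩ hs
    simp only [mem_sigma, HasAntidiagonal.mem_antidiagonal] at hs
    obtain ⟨h1, h2⟩ := hs
    subst h2
    rfl
  case h => intro s hs; rfl

noncomputable def CC : ℕ → SymF :=
  fun r => ∑ x ∈ Finset.HasAntidiagonal.antidiagonal r, (-1 : SymF) ^ x.1 * hh x.1 * hh x.2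

lemma neg_one_pow_eq_of_even_add {s t : ℕ} (h : Even (s + t)) :
    (-1 : SymF) ^ s = (-1 : SymF) ^ t := by
  rcases Nat.even_or_odd s with hs | hs
  · have ht : Even t := by
      rw [Nat.even_add] at h
      exact h.mp hs
    rw [hs.neg_one_pow, ht.neg_one_pow]
  · have ht : Odd t := by
      rw [Nat.even_add] at h
      rw [Nat.odd_iff] at hs ⊢
      rw [Nat.even_iff, Nat.even_iff] at h
      omega
    rw [hs.neg_one_pow, ht.neg_one_pow]

lemma CC_odd {r : ℕ} (h : Odd r) : CC r = 0 := by
  have hswap : CC r = ∑ x ∈ Finset.HasAntidiagonal.antidiagonal r,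
      (-1 : SymF) ^ x.2 * hh x.2 * hh x.1 := by
    rw [CC]
    conv_lhs => rw [← Finset.HasAntidiagonal.map_swap_antidiagonal (n := r)]
    rw [Finset.sum_map]
    simp
  have : CC r = - CC r := by
    nth_rewrite 1 [hswap]
    rw [CC, ← Finset.sum_neg_distrib]
    apply Finset.sum_congr rfl
    rintro ⟨a, b⟩ hx
    simp only [HasAntidiagonal.mem_antidiagonal] at hx
    have hsign : (-1 : SymF) ^ b = -(-1 : SymF) ^ a := by
      have : (-1 : SymF) ^ b = (-1 : SymF) ^ (a + 1) := by
        apply neg_one_pow_eq_of_even_add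
        obtain ⟨c, hc⟩ := h
        exact ⟨c + 1, by omega⟩
      rw [this, pow_succ]
      ring
    rw [hsign]
    ring
  have h2 : CC r + CC r = 0 := by nth_rewrite 1 [this]; ring
  exact (add_self_eq_zero).mp h2

lemma CC_zero : CC 0 = 1 := by
  rw [CC]
  simp [hh]

lemma mainrec (m : ℕ) : ((m : ℚ) + 1) • CC (2 * (m + 1)) =
    ∑ i ∈ Finset.range (m + 1), pSym ((i + 1) * 2) * CC (2 * (m - i)) := by
  set r := 2 * (m + 1) with hr
  have hreven : Even r := ⟨m + 1, by omega⟩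
  -- Step A
  have hA : (r : ℚ) • CC r =
      (∑ x ∈ Finset.HasAntidiagonal.antidiagonal r, (-1 : SymF) ^ x.1 * ((x.1 : ℚ) • hh x.1) * hh x.2) +
      (∑ x ∈ Finset.HasAntidiagonal.antidiagonal r, (-1 : SymF) ^ x.1 * hh x.1 * ((x.2 : ℚ) • hh x.2)) := by
    rw [CC, Finset.smul_sum, ← Finset.sum_add_distrib]
    apply Finset.sum_congr rfl
    rintro ⟨a, b⟩ hx
    simp only [HasAntidiagonal.mem_antidiagonal] at hx
    rw [smul_eq_C_mul, smul_eq_C_mul, smul_eq_C_mul, ← hx,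
      show ((a + b : ℕ) : ℚ) = (a : ℚ) + (b : ℚ) by push_cast; ring, map_add]
    ring
  -- Step B
  have hB : (∑ x ∈ Finset.HasAntidiagonal.antidiagonal r, (-1 : SymF) ^ x.1 * ((x.1 : ℚ) • hh x.1) * hh x.2)
      = ∑ x ∈ Finset.HasAntidiagonal.antidiagonal r, (-1 : SymF) ^ x.1 * qq x.1 * CC x.2 := by
    have e1 : ∀ x : ℕ × ℕ, x ∈ Finset.HasAntidiagonal.antidiagonal r →
        (-1 : SymF) ^ x.1 * ((x.1 : ℚ) • hh x.1) * hh x.2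
        = ∑ y ∈ Finset.HasAntidiagonal.antidiagonal x.1,
            (-1 : SymF) ^ y.1 * (-1 : SymF) ^ y.2 * qq y.1 * hh y.2 * hh x.2 := by
      rintro ⟨a, b⟩ hx
      simp only []
      rw [qnewton, Finset.mul_sum, Finset.sum_mul]
      apply Finset.sum_congr rfl
      rintro ⟨k, j⟩ hy
      simp only [HasAntidiagonal.mem_antidiagonal] at hy
      rw [← hy, pow_add]
      ring
    rw [Finset.sum_congr rfl e1,
      triple r (fun k j b => (-1 : SymF) ^ k * (-1 : SymF) ^ j * qq k * hh j * hh b)]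
    apply Finset.sum_congr rfl
    rintro ⟨k, mm⟩ hx
    simp only [CC, Finset.mul_sum]
    apply Finset.sum_congr rfl
    rintro ⟨j, b⟩ hy
    ring
  -- Step C
  have hC : (∑ x ∈ Finset.HasAntidiagonal.antidiagonal r, (-1 : SymF) ^ x.1 * hh x.1 * ((x.2 : ℚ) • hh x.2))
      = ∑ x ∈ Finset.HasAntidiagonal.antidiagonal r, (-1 : SymF) ^ x.1 * ((x.1 : ℚ) • hh x.1) * hh x.2 := by
    conv_lhs => rw [← Finset.HasAntidiagonal.map_swap_antidiagonal (n := r)]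
    rw [Finset.sum_map]
    apply Finset.sum_congr rfl
    rintro ⟨a, b⟩ hx
    simp only [HasAntidiagonal.mem_antidiagonal] at hx
    simp only [Function.Embedding.coeFn_mk, Prod.swap_prod_mk]
    have hsign : (-1 : SymF) ^ b = (-1 : SymF) ^ a := by
      apply neg_one_pow_eq_of_even_add
      rw [show b + a = r by omega]
      exact hreven
    rw [hsign]
    ring
  -- Step D
  have hD : (∑ x ∈ Finset.HasAntidiagonal.antidiagonal r, (-1 : SymF) ^ x.1 * qq x.1 * CC x.2)
      = ∑ i ∈ Finset.range (m + 1), pSym ((i + 1) * 2) * CC (2 * (m - i)) := by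
    rw [Finset.Nat.sum_antidiagonal_eq_sum_range_succ_mk]
    have himg : ∑ k ∈ Finset.range (r + 1), (-1 : SymF) ^ k * qq k * CC (r - k)
        = ∑ k ∈ (Finset.range (m + 1)).image (fun i => 2 * i + 2),
            (-1 : SymF) ^ k * qq k * CC (r - k) := by
      symm
      apply Finset.sum_subset
      · intro k hk
        simp only [Finset.mem_image, Finset.mem_range] at hk ⊢
        omega
      · intro k hk hnk
        simp only [Finset.mem_image, Finset.mem_range] at hk hnk
        rcases Nat.eq_zero_or_pos k with hk0 | hkpos
        · subst hk0; simp [qq]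
        rcases Nat.even_or_odd k with hke | hko
        · exfalso
          obtain ⟨c, hc⟩ := hke
          exact hnk ⟨c - 1, by omega, by omega⟩
        · have : Odd (r - k) := by
            rw [Nat.odd_iff] at hko ⊢
            omega
          rw [CC_odd this, mul_zero]
    have hinj : ∀ x ∈ Finset.range (m + 1), ∀ y ∈ Finset.range (m + 1),
        2 * x + 2 = 2 * y + 2 → x = y := by intro x _ y _ h; omega
    rw [himg, Finset.sum_image hinj]
    apply Finset.sum_congr rfl
    intro i hi
    simp only [Finset.mem_range] at hi
    have h1 : (-1 : SymF) ^ (2 * i + 2) = 1 := Even.neg_one_pow ⟨i + 1, by omega⟩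
    have h2 : qq (2 * i + 2) = pSym ((i + 1) * 2) := by
      rw [show 2 * i + 2 = (i + 1) * 2 by omega]
      simp [qq]
    have h3 : r - (2 * i + 2) = 2 * (m - i) := by rw [hr]; omega
    rw [h1, h2, h3, one_mul]
  -- combine
  have hsum : ((2 : ℚ) * ((m : ℚ) + 1)) • CC r =
      (2 : ℚ) • ∑ i ∈ Finset.range (m + 1), pSym ((i + 1) * 2) * CC (2 * (m - i)) := by
    have : ((r : ℕ) : ℚ) = (2 : ℚ) * ((m : ℚ) + 1) := by rw [hr]; push_cast; ring
    rw [← this, hA, hC, hB, hD, two_smul]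
  rw [mul_smul] at hsum
  have h2 := congrArg (fun z => ((2 : ℚ)⁻¹) • z) hsum
  simp only [smul_smul, inv_mul_cancel₀ (two_ne_zero (α := ℚ)), one_smul] at h2
  rw [show (2 : ℚ)⁻¹ * (2 * ((m : ℚ) + 1)) = (m : ℚ) + 1 by ring] at h2
  exact h2

lemma hInP_eq_CC (n : ℕ) :
    aeval (fun i => pSym ((i + 1) * 2)) (hInP n) = CC (2 * n) := by
  induction n using Nat.strong_induction_on with
  | _ n ih =>
    match n with
    | 0 => rw [hInP]; simp [CC_zero]
    | Nat.succ n =>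
      rw [hInP, map_smul, map_sum]
      have e1 : ∀ i ∈ Finset.range (n + 1),
          aeval (fun i => pSym ((i + 1) * 2)) (X i * hInP (n - i))
          = pSym ((i + 1) * 2) * CC (2 * (n - i)) := by
        intro i hi
        rw [map_mul, aeval_X, ih (n - i) (by omega)]
      rw [Finset.sum_congr rfl e1, ← mainrec n, smul_smul,
        inv_mul_cancel₀ (by positivity : ((n : ℚ) + 1) ≠ 0), one_smul]

lemma toP_hh (k : ℕ) : toP (hh k) = hInP k := by
  cases k with
  | zero => simp [hh, hInP, toP]
  | succ k => simp [hh, toP]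

lemma toP_pSym (n : ℕ) : toP (pSym (n + 1)) = X n := by
  induction n using Nat.strong_induction_on with
  | _ n ih =>
    rw [pSym, map_sub, map_smul, map_sum, toP_hh]
    have e1 : ∀ i ∈ (Finset.range n).attach,
        toP (pSym (i.1 + 1) * hh (n - i.1)) = X i.1 * hInP (n - i.1) := by
      intro i _
      rw [map_mul, ih i.1 (Finset.mem_range.mp i.2), toP_hh]
    rw [Finset.sum_congr rfl e1,
      Finset.sum_attach (Finset.range n) (fun i => X i * hInP (n - i))]
    have e2 : ((n : ℚ) + 1) • hInP (n + 1)
        = ∑ i ∈ Finset.range (n + 1), X i * hInP (n - i) := by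
      rw [hInP, smul_smul, mul_inv_cancel₀ (by positivity : ((n : ℚ) + 1) ≠ 0), one_smul]
    rw [e2, Finset.sum_range_succ, Nat.sub_self, hInP, mul_one]
    ring

lemma lhs_eq (n : ℕ) (hn : 1 ≤ n) : pleth (pSym 2) (hh n) = CC (2 * n) := by
  rw [pleth, show (2 : ℕ) = 1 + 1 from rfl, toP_pSym, aeval_X, psub, toP_hh,
    hInP_eq_CC]

lemma hZ_natCast (k : ℕ) : hZ (k : ℤ) = hh k := by
  simp [hZ]

lemma schur_pair (x y : ℕ) : schur [x, y] =
    hh x * hh y - hh (x + 1) * hZ ((y : ℤ) - 1) := by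
  rw [schur, Matrix.det_fin_two]
  simp only [Matrix.of_apply, List.get]
  norm_num
  rw [hZ_natCast, hZ_natCast, show ((x:ℤ) + 1) = ((x + 1 : ℕ) : ℤ) by push_cast; ring,
    hZ_natCast]

lemma rhs_eq (n : ℕ) (hn : 1 ≤ n) :
    ∑ a ∈ Finset.range (n + 1), (-1 : SymF) ^ a * schur [2 * n - a, a] = CC (2 * n) := by
  have e1 : ∀ a ∈ Finset.range (n + 1), (-1 : SymF) ^ a * schur [2 * n - a, a]
      = (-1 : SymF) ^ a * (hh (2 * n - a) * hh a)
        - (-1 : SymF) ^ a * (hh (2 * n - a + 1) * hZ ((a : ℤ) - 1)) := by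
    intro a ha
    rw [schur_pair]
    ring
  rw [Finset.sum_congr rfl e1, Finset.sum_sub_distrib]
  have e2 : ∑ a ∈ Finset.range (n + 1),
        (-1 : SymF) ^ a * (hh (2 * n - a + 1) * hZ ((a : ℤ) - 1))
      = - ∑ a ∈ Finset.range n, (-1 : SymF) ^ a * (hh (2 * n - a) * hh a) := by
    rw [Finset.sum_range_succ']
    have hz0 : hZ (((0 : ℕ) : ℤ) - 1) = 0 := by simp [hZ]
    rw [hz0]
    simp only [mul_zero, zero_mul, add_zero, pow_zero]
    rw [← Finset.sum_neg_distrib]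
    apply Finset.sum_congr rfl
    intro a ha
    simp only [Finset.mem_range] at ha
    have h1 : hZ (((a + 1 : ℕ) : ℤ) - 1) = hh a := by
      rw [show ((a + 1 : ℕ) : ℤ) - 1 = (a : ℤ) by push_cast; ring, hZ_natCast]
    have h2 : 2 * n - (a + 1) + 1 = 2 * n - a := by omega
    rw [h1, h2, pow_succ]
    ring
  rw [e2, sub_neg_eq_add, CC, Finset.Nat.sum_antidiagonal_eq_sum_range_succ_mk]
  have split : ∑ k ∈ Finset.range (2 * n + 1), (-1 : SymF) ^ k * hh k * hh (2 * n - k)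
      = (∑ k ∈ Finset.range (n + 1), (-1 : SymF) ^ k * hh k * hh (2 * n - k))
        + ∑ k ∈ Finset.Ico (n + 1) (2 * n + 1), (-1 : SymF) ^ k * hh k * hh (2 * n - k) := by
    rw [Finset.range_eq_Ico, Finset.range_eq_Ico]
    exact (Finset.sum_Ico_consecutive (fun k => (-1 : SymF) ^ k * hh k * hh (2 * n - k)) (by omega : 0 ≤ n + 1)
      (by omega : n + 1 ≤ 2 * n + 1)).symm
  rw [split]
  congr 1
  · apply Finset.sum_congr rfl
    intro a ha
    ring
  · symm
    apply Finset.sum_nbij' (i := fun k => 2 * n - k) (j := fun a => 2 * n - a)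
    · intro k hk
      simp only [Finset.mem_Ico, Finset.mem_range] at hk ⊢
      omega
    · intro a ha
      simp only [Finset.mem_Ico, Finset.mem_range] at ha ⊢
      omega
    · intro k hk
      simp only [Finset.mem_Ico] at hk
      omega
    · intro a ha
      simp only [Finset.mem_range] at ha
      omega
    · intro k hk
      simp only [Finset.mem_Ico] at hk
      have h1 : 2 * n - (2 * n - k) = k := by omega
      have hsign : (-1 : SymF) ^ k = (-1 : SymF) ^ (2 * n - k) := by
        apply neg_one_pow_eq_of_even_add
        exact ⟨n, by omega⟩
      rw [h1, hsign]
      ring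

/-- `p_2[h_n] = ∑_{a=0}^n (-1)^a s_{(2n-a, a)}`. -/
theorem p2_pleth_hn (n : ℕ) (hn : 1 ≤ n) :
    pleth (pSym 2) (hh n) =
      ∑ a ∈ Finset.range (n + 1), (-1 : SymF) ^ a * schur [2 * n - a, a] := by
  rw [lhs_eq n hn, rhs_eq n hn]
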